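/- Every biprojective Banach algebra with a bounded approximate identity is amenable. -/

import Mathlib

open Filter Topology NormedSpace

/-- A Banach `A`-bimodule: completely determined by bounded left/right actions. -/
structure BBimod (A : Type) [NonUnitalNormedRing A] [NormedSpace ℂ A]
    (E : Type) [NormedAddCommGroup E] [NormedSpace ℂ E] where
  l : A →L[ℂ] E →L[ℂ] E
  r : A →L[ℂ] E →L[ℂ] E
  l_mul : ∀ a b x, l (a * b) x = l a (l b x)
  r_mul : ∀ a b x, r (a * b) x = r b (r a x)
  lr : ∀ a b x, l a (r b x) = r b (l a x)

variable {A : Type} [NonUnitalNormedRing A] [NormedSpace ℂ A]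
variable {E : Type} [NormedAddCommGroup E] [NormedSpace ℂ E]

/-- `D` is a derivation from `A` into the dual bimodule `E⋆` of `E`:
`D(ab) = a·D(b) + D(a)·b`, where `(a·φ)(x) = φ(x·a)` and `(φ·a)(x) = φ(a·x)`. -/
def BBimod.IsDualDerivation (M : BBimod A E) (D : A →L[ℂ] StrongDual ℂ E) : Prop :=
  ∀ a b x, D (a * b) x = D a (M.l b x) + D b (M.r a x)

/-- `D` is inner: `D a = a·φ - φ·a` for some `φ ∈ E⋆`. -/
def BBimod.IsInner (M : BBimod A E) (D : A →L[ℂ] StrongDual ℂ E) : Prop :=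
  ∃ φ : StrongDual ℂ E, ∀ a x, D a x = φ (M.r a x) - φ (M.l a x)

/-- `E` is pseudo-unital: `E = {a · x · b : a, b ∈ A, x ∈ E}`. -/
def BBimod.PseudoUnital (M : BBimod A E) : Prop :=
  ∀ x : E, ∃ a b y, x = M.l a (M.r b y)

/-- `A` is amenable: every bounded derivation into a dual Banach bimodule is inner. -/
def Amenable (A : Type) [NonUnitalNormedRing A] [NormedSpace ℂ A] : Prop :=
  ∀ (E : Type) [NormedAddCommGroup E] [NormedSpace ℂ E] [CompleteSpace E]
    (M : BBimod A E) (D : A →L[ℂ] StrongDual ℂ E),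
    M.IsDualDerivation D → M.IsInner D

/-- `A` has a bounded approximate identity. -/
def BAI (A : Type) [NonUnitalNormedRing A] : Prop :=
  ∃ (ι : Type) (F : Filter ι) (e : ι → A), F.NeBot ∧ (∃ C, ∀ i, ‖e i‖ ≤ C) ∧
    ∀ a : A, Tendsto (fun i => e i * a) F (𝓝 a) ∧ Tendsto (fun i => a * e i) F (𝓝 a)

/-- `(X, t)` is the projective tensor product `E ⊗̂ F` of Banach spaces: `t` is a contractive
bilinear map with dense span satisfying the universal property for bounded bilinear maps. -/
structure IsProjTensor (E F X : Type) [NormedAddCommGroup E] [NormedSpace ℂ E]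
    [NormedAddCommGroup F] [NormedSpace ℂ F] [NormedAddCommGroup X] [NormedSpace ℂ X]
    (t : E →L[ℂ] F →L[ℂ] X) : Prop where
  span_dense : Dense ((Submodule.span ℂ {z : X | ∃ e f, t e f = z} : Submodule ℂ X) : Set X)
  norm_le : ∀ e f, ‖t e f‖ ≤ ‖e‖ * ‖f‖
  lift : ∀ (Y : Type) [NormedAddCommGroup Y] [NormedSpace ℂ Y] [CompleteSpace Y]
    (b : E →L[ℂ] F →L[ℂ] Y), ∃ T : X →L[ℂ] Y, ‖T‖ ≤ ‖b‖ ∧ ∀ e f, T (t e f) = b e f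



section Helpers

variable {ι : Type} (U : Ultrafilter ι)

/-- Limit of a bounded net of complex numbers along an ultrafilter. -/
noncomputable def uLim (f : ι → ℂ) : ℂ := limUnder U f

lemma uLim_spec (f : ι → ℂ) (B : ℝ) (hB : ∀ i, ‖f i‖ ≤ B) :
    Tendsto f ↑U (𝓝 (uLim U f)) := by
  refine tendsto_nhds_limUnder ?_
  have h1 : ↑(U.map f) ≤ 𝓟 (Metric.closedBall (0:ℂ) B) := by
    simp only [Ultrafilter.coe_map, le_principal_iff, mem_map]
    have : ∀ i, f i ∈ Metric.closedBall (0:ℂ) B := fun i => by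
      simpa [Metric.mem_closedBall, dist_eq_norm] using hB i
    exact univ_mem' this
  obtain ⟨c, -, hc⟩ := (isCompact_closedBall (0:ℂ) B).ultrafilter_le_nhds (U.map f) h1
  exact ⟨c, hc⟩

lemma uLim_eq {f : ι → ℂ} {c : ℂ} (h : Tendsto f ↑U (𝓝 c)) : uLim U f = c :=
  tendsto_nhds_unique (tendsto_nhds_limUnder ⟨c, h⟩) h

variable {E : Type} [NormedAddCommGroup E] [NormedSpace ℂ E]

/-- Weak-* limit of a bounded net of functionals along an ultrafilter. -/
noncomputable def wLim (ψ : ι → StrongDual ℂ E) (B : ℝ) (hB : ∀ i, ‖ψ i‖ ≤ B) : StrongDual ℂ E :=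
  LinearMap.mkContinuous
    { toFun := fun x => uLim U (fun i => ψ i x)
      map_add' := by
        intro x y
        refine uLim_eq U ?_
        have hx := uLim_spec U (fun i => ψ i x) (B * ‖x‖)
          (fun i => ((ψ i).le_opNorm x).trans (by
            exact mul_le_mul_of_nonneg_right (hB i) (norm_nonneg x)))
        have hy := uLim_spec U (fun i => ψ i y) (B * ‖y‖)
          (fun i => ((ψ i).le_opNorm y).trans (by
            exact mul_le_mul_of_nonneg_right (hB i) (norm_nonneg y)))
        simpa [map_add] using hx.add hy
      map_smul' := by
        intro c x
        refine uLim_eq U ?_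
        have hx := uLim_spec U (fun i => ψ i x) (B * ‖x‖)
          (fun i => ((ψ i).le_opNorm x).trans (by
            exact mul_le_mul_of_nonneg_right (hB i) (norm_nonneg x)))
        simpa [map_smul] using hx.const_smul c }
    B
    (by
      intro x
      have hx := uLim_spec U (fun i => ψ i x) (B * ‖x‖)
        (fun i => ((ψ i).le_opNorm x).trans (by
          exact mul_le_mul_of_nonneg_right (hB i) (norm_nonneg x)))
      refine le_of_tendsto' hx.norm (fun i => ?_)
      exact ((ψ i).le_opNorm x).trans (mul_le_mul_of_nonneg_right (hB i) (norm_nonneg x)))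

lemma wLim_spec (ψ : ι → StrongDual ℂ E) (B : ℝ) (hB : ∀ i, ‖ψ i‖ ≤ B) (x : E) :
    Tendsto (fun i => ψ i x) ↑U (𝓝 (wLim U ψ B hB x)) :=
  uLim_spec U _ (B * ‖x‖)
    (fun i => ((ψ i).le_opNorm x).trans (mul_le_mul_of_nonneg_right (hB i) (norm_nonneg x)))

lemma wLim_norm_le (ψ : ι → StrongDual ℂ E) (B : ℝ) (hB : ∀ i, ‖ψ i‖ ≤ B) (hB0 : 0 ≤ B) :
    ‖wLim U ψ B hB‖ ≤ B :=
  LinearMap.mkContinuous_norm_le _ hB0 _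

end Helpers

section Smear

variable {ι : Type} (U : Ultrafilter ι)
variable {A : Type} [NonUnitalNormedRing A] [NormedSpace ℂ A]
variable {E : Type} [NormedAddCommGroup E] [NormedSpace ℂ E]

lemma smear_bound (e : ι → A) (C : ℝ) (hC : ∀ i, ‖e i‖ ≤ C)
    (S : A →L[ℂ] E →L[ℂ] E) (ψ : StrongDual ℂ E) (i : ι) :
    ‖ψ.comp (S (e i))‖ ≤ ‖S‖ * C * ‖ψ‖ := by
  calc ‖ψ.comp (S (e i))‖ ≤ ‖ψ‖ * ‖S (e i)‖ := ψ.opNorm_comp_le _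
    _ ≤ ‖ψ‖ * (‖S‖ * ‖e i‖) := by
        exact mul_le_mul_of_nonneg_left (S.le_opNorm (e i)) (norm_nonneg ψ)
    _ ≤ ‖ψ‖ * (‖S‖ * C) := by
        refine mul_le_mul_of_nonneg_left ?_ (norm_nonneg ψ)
        exact mul_le_mul_of_nonneg_left ((hC i).trans le_rfl) (norm_nonneg S)
    _ = ‖S‖ * C * ‖ψ‖ := by ring

/-- The operator `ψ ↦ w*-lim_U ψ ∘ S (e i)` on the dual. -/
noncomputable def smear (e : ι → A) (C : ℝ) (hC : ∀ i, ‖e i‖ ≤ C)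
    (S : A →L[ℂ] E →L[ℂ] E) : StrongDual ℂ E →L[ℂ] StrongDual ℂ E :=
  LinearMap.mkContinuous
    { toFun := fun ψ => wLim U (fun i => ψ.comp (S (e i))) (‖S‖ * C * ‖ψ‖)
        (smear_bound e C hC S ψ)
      map_add' := by
        intro ψ ψ'
        refine ContinuousLinearMap.ext fun x => ?_
        have h := (wLim_spec U (fun i => ψ.comp (S (e i))) _
            (smear_bound e C hC S ψ) x).add
          (wLim_spec U (fun i => ψ'.comp (S (e i))) _ (smear_bound e C hC S ψ') x)
        have h2 := wLim_spec U (fun i => (ψ + ψ').comp (S (e i))) _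
            (smear_bound e C hC S (ψ + ψ')) x
        refine tendsto_nhds_unique h2 ?_
        simpa using h
      map_smul' := by
        intro c ψ
        refine ContinuousLinearMap.ext fun x => ?_
        have h := (wLim_spec U (fun i => ψ.comp (S (e i))) _
            (smear_bound e C hC S ψ) x).const_smul c
        have h2 := wLim_spec U (fun i => (c • ψ).comp (S (e i))) _
            (smear_bound e C hC S (c • ψ)) x
        refine tendsto_nhds_unique h2 ?_
        simpa using h }
    (‖S‖ * C)
    (by
      intro ψ
      have hne : Nonempty ι := Filter.nonempty_of_neBot ↑U
      have hC0 : (0:ℝ) ≤ C := (norm_nonneg (e (Classical.arbitrary ι))).trans (hC _)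
      exact wLim_norm_le U (fun i => ψ.comp (S (e i))) _ (smear_bound e C hC S ψ)
        (by positivity))

lemma smear_spec (e : ι → A) (C : ℝ) (hC : ∀ i, ‖e i‖ ≤ C)
    (S : A →L[ℂ] E →L[ℂ] E) (ψ : StrongDual ℂ E) (x : E) :
    Tendsto (fun i => ψ (S (e i) x)) ↑U (𝓝 (smear U e C hC S ψ x)) :=
  wLim_spec U (fun i => ψ.comp (S (e i))) _ (smear_bound e C hC S ψ) x

end Smear

lemma IsProjTensor.ext_clm {E F X : Type} [NormedAddCommGroup E] [NormedSpace ℂ E]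
    [NormedAddCommGroup F] [NormedSpace ℂ F] [NormedAddCommGroup X] [NormedSpace ℂ X]
    {t : E →L[ℂ] F →L[ℂ] X} (ht : IsProjTensor E F X t)
    (g₁ g₂ : X →L[ℂ] ℂ) (h : ∀ u v, g₁ (t u v) = g₂ (t u v)) : g₁ = g₂ :=
  ContinuousLinearMap.ext_on ht.span_dense (by rintro z ⟨u, v, rfl⟩; exact h u v)

set_option maxHeartbeats 2000000 in
/-- Every biprojective Banach algebra with a bounded approximate identity is
amenable.  Here `(X, t)` realizes `A ⊗̂ A` with its canonical `A`-bimodule actions `l`, `r`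
and multiplication map `Δ`, and biprojectivity is the existence of a bounded `A`-bimodule
right inverse `ρ` of `Δ`. -/
theorem statement5 (A : Type) [NonUnitalNormedRing A] [NormedSpace ℂ A]
    [IsScalarTower ℂ A A] [SMulCommClass ℂ A A] [CompleteSpace A]
    (X : Type) [NormedAddCommGroup X] [NormedSpace ℂ X] [CompleteSpace X]
    (t : A →L[ℂ] A →L[ℂ] X) (ht : IsProjTensor A A X t)
    (l r : A →L[ℂ] X →L[ℂ] X)
    (hlt : ∀ a x y, l a (t x y) = t (a * x) y)
    (hrt : ∀ a x y, r a (t x y) = t x (y * a))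
    (Δ : X →L[ℂ] A) (hΔ : ∀ a b, Δ (t a b) = a * b)
    -- biprojectivity:
    (hbiproj : ∃ ρ : A →L[ℂ] X, (∀ a, Δ (ρ a) = a) ∧
      (∀ a b, ρ (a * b) = l a (ρ b)) ∧ (∀ a b, ρ (a * b) = r b (ρ a)))
    -- bounded approximate identity:
    (hbai : BAI A) :
    Amenable A := by
  obtain ⟨ρ, hρΔ, hρl, hρr⟩ := hbiproj
  obtain ⟨ι, F, e, hF, ⟨C₀, hC₀⟩, he⟩ := hbai
  intro E _ _ _ M D hD
  haveI := hF
  obtain ⟨U, hU⟩ := Ultrafilter.exists_le F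
  set C := max C₀ 0 with hCdef
  have hC : ∀ i, ‖e i‖ ≤ C := fun i => (hC₀ i).trans (le_max_left _ _)
  have heaU : ∀ a : A, Tendsto (fun i => e i * a) ↑U (𝓝 a) :=
    fun a => ((he a).1).mono_left hU
  have haeU : ∀ a : A, Tendsto (fun i => a * e i) ↑U (𝓝 a) :=
    fun a => ((he a).2).mono_left hU
  set P : StrongDual ℂ E →L[ℂ] StrongDual ℂ E := smear U e C hC M.r with hPdef
  set Q : StrongDual ℂ E →L[ℂ] StrongDual ℂ E := smear U e C hC M.l with hQdef
  have hP : ∀ (ψ : StrongDual ℂ E) (x : E),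
      Tendsto (fun i => ψ (M.r (e i) x)) ↑U (𝓝 (P ψ x)) :=
    fun ψ x => smear_spec U e C hC M.r ψ x
  have hQ : ∀ (ψ : StrongDual ℂ E) (x : E),
      Tendsto (fun i => ψ (M.l (e i) x)) ↑U (𝓝 (Q ψ x)) :=
    fun ψ x => smear_spec U e C hC M.l ψ x
  set D₁ : A →L[ℂ] StrongDual ℂ E := D - P.comp D with hD₁def
  have hD₁x : ∀ a x, D₁ a x = D a x - P (D a) x := by
    intro a x; simp [hD₁def]
  -- D₁ annihilates the range of the right action
  have hD₁r : ∀ u a y, D₁ u (M.r a y) = 0 := by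
    intro u a y
    have h1 := hP (D u) (M.r a y)
    have h2 : Tendsto (fun i => (D u) (M.r (e i) (M.r a y))) ↑U (𝓝 (D u (M.r a y))) := by
      have heq : (fun i => (D u) (M.r (e i) (M.r a y)))
          = fun i => ((D u).comp (M.r.flip y)) (a * e i) := by
        funext i
        simp [ContinuousLinearMap.comp_apply, ContinuousLinearMap.flip_apply, M.r_mul]
      rw [heq]
      exact (((D u).comp (M.r.flip y)).continuous.tendsto a).comp (haeU a)
    have h3 := tendsto_nhds_unique h1 h2
    rw [hD₁x, h3, sub_self]
  -- D₁ is a derivation for the bimodule (M.l, 0)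
  have hD₁d : ∀ a b x, D₁ (a * b) x = D₁ a (M.l b x) := by
    intro a b x
    have h1 := hP (D (a * b)) x
    have h2 : Tendsto (fun i => (D (a * b)) (M.r (e i) x))
        ↑U (𝓝 (P (D a) (M.l b x) + D b (M.r a x))) := by
      have heq : (fun i => (D (a * b)) (M.r (e i) x))
          = fun i => (D a) (M.r (e i) (M.l b x)) + ((D b).comp (M.r.flip x)) (e i * a) := by
        funext i
        rw [hD a b (M.r (e i) x)]
        simp [ContinuousLinearMap.comp_apply, ContinuousLinearMap.flip_apply, M.lr, M.r_mul]
      rw [heq]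
      exact (hP (D a) (M.l b x)).add
        ((((D b).comp (M.r.flip x)).continuous.tendsto a).comp (heaU a))
    have h3 := tendsto_nhds_unique h1 h2
    rw [hD₁x, hD₁x, hD a b x, h3]
    ring
  -- Q fixes the range of D₁
  have hQD₁ : ∀ a x, Q (D₁ a) x = D₁ a x := by
    have hprod : ∀ a b x, Q (D₁ (a * b)) x = D₁ (a * b) x := by
      intro a b x
      have h1 := hQ (D₁ (a * b)) x
      have h2 : Tendsto (fun i => (D₁ (a * b)) (M.l (e i) x)) ↑U (𝓝 (D₁ (a * b) x)) := by
        have heq : (fun i => (D₁ (a * b)) (M.l (e i) x))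
            = fun i => ((D₁ a).comp (M.l.flip x)) (b * e i) := by
          funext i
          rw [hD₁d a b (M.l (e i) x)]
          simp [ContinuousLinearMap.comp_apply, ContinuousLinearMap.flip_apply, M.l_mul]
        rw [heq]
        have h3 := (((D₁ a).comp (M.l.flip x)).continuous.tendsto b).comp (haeU b)
        have h4 : ((D₁ a).comp (M.l.flip x)) b = D₁ (a * b) x := by
          simp [ContinuousLinearMap.comp_apply, ContinuousLinearMap.flip_apply, hD₁d a b x]
        rwa [h4] at h3
      exact tendsto_nhds_unique h1 h2
    intro a x
    set f : A →L[ℂ] ℂ :=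
      (ContinuousLinearMap.apply ℂ ℂ x).comp (Q.comp D₁ - D₁) with hfdef
    have hf0 : ∀ i, f (e i * a) = 0 := by
      intro i
      simp only [hfdef, ContinuousLinearMap.comp_apply, ContinuousLinearMap.sub_apply,
        ContinuousLinearMap.apply_apply]
      rw [hprod (e i) a x]
      ring
    have h1 : Tendsto (fun i => f (e i * a)) ↑U (𝓝 (f a)) :=
      (f.continuous.tendsto a).comp (heaU a)
    have h2 : Tendsto (fun i => f (e i * a)) ↑U (𝓝 0) := by
      simpa [hf0] using (tendsto_const_nhds : Tendsto (fun _ : ι => (0:ℂ)) ↑U (𝓝 0))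
    have h3 : f a = 0 := tendsto_nhds_unique h1 h2
    have h4 : Q (D₁ a) x - D₁ a x = 0 := by
      simpa [hfdef, ContinuousLinearMap.comp_apply, ContinuousLinearMap.sub_apply,
        ContinuousLinearMap.apply_apply] using h3
    exact sub_eq_zero.mp h4
  -- tensor lifts
  set B' : A →L[ℂ] A →L[ℂ] StrongDual ℂ E :=
    (((ContinuousLinearMap.compL ℂ E E ℂ).comp D).flip).comp M.r with hB'def
  have hB'app : ∀ u v x, B' u v x = D v (M.r u x) := fun u v x => rfl
  obtain ⟨Ψ', -, hΨ'⟩ := ht.lift (StrongDual ℂ E) B'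
  set B₁ : A →L[ℂ] A →L[ℂ] StrongDual ℂ E :=
    ((((ContinuousLinearMap.compL ℂ E E ℂ).comp D₁).flip).comp M.l).flip with hB₁def
  have hB₁app : ∀ u v x, B₁ u v x = D₁ u (M.l v x) := fun u v x => rfl
  obtain ⟨Ψ₁, -, hΨ₁⟩ := ht.lift (StrongDual ℂ E) B₁
  -- the weak-* limit functionals
  have hρb : ∀ (Ψ : X →L[ℂ] StrongDual ℂ E) (i : ι), ‖Ψ (ρ (e i))‖ ≤ ‖Ψ‖ * ‖ρ‖ * C := by
    intro Ψ i
    calc ‖Ψ (ρ (e i))‖ ≤ ‖Ψ‖ * ‖ρ (e i)‖ := Ψ.le_opNorm _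
      _ ≤ ‖Ψ‖ * (‖ρ‖ * ‖e i‖) :=
          mul_le_mul_of_nonneg_left (ρ.le_opNorm _) (norm_nonneg Ψ)
      _ ≤ ‖Ψ‖ * (‖ρ‖ * C) := by
          refine mul_le_mul_of_nonneg_left ?_ (norm_nonneg Ψ)
          exact mul_le_mul_of_nonneg_left (hC i) (norm_nonneg ρ)
      _ = ‖Ψ‖ * ‖ρ‖ * C := by ring
  set φ' : StrongDual ℂ E := wLim U (fun i => Ψ' (ρ (e i))) (‖Ψ'‖ * ‖ρ‖ * C) (hρb Ψ') with hφ'def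
  have hφ' : ∀ y, Tendsto (fun i => Ψ' (ρ (e i)) y) ↑U (𝓝 (φ' y)) :=
    fun y => wLim_spec U _ _ (hρb Ψ') y
  set φ₁ : StrongDual ℂ E := wLim U (fun i => Ψ₁ (ρ (e i))) (‖Ψ₁‖ * ‖ρ‖ * C) (hρb Ψ₁) with hφ₁def
  have hφ₁ : ∀ y, Tendsto (fun i => Ψ₁ (ρ (e i)) y) ↑U (𝓝 (φ₁ y)) :=
    fun y => wLim_spec U _ _ (hρb Ψ₁) y
  -- evaluation functionals
  set ev : E → (StrongDual ℂ E →L[ℂ] ℂ) := fun y => ContinuousLinearMap.apply ℂ ℂ y with hevdef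
  -- key identity for the Ψ' part
  have keyP : ∀ a x, P (D a) x = φ' (M.r a x) - φ' (M.l a x) := by
    intro a x
    set g₁ : X →L[ℂ] ℂ := (ev x).comp (Ψ'.comp (l a)) - (ev x).comp (Ψ'.comp (r a)) with hg₁
    set g₂ : X →L[ℂ] ℂ := (ev (M.r a x)).comp Ψ' - (ev (M.l a x)).comp Ψ'
        - (D a).comp ((M.r.flip x).comp Δ) with hg₂
    have hg : g₁ = g₂ := by
      refine ht.ext_clm g₁ g₂ ?_
      intro u v
      simp only [hg₁, hg₂, hevdef, ContinuousLinearMap.comp_apply,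
        ContinuousLinearMap.sub_apply, ContinuousLinearMap.apply_apply,
        ContinuousLinearMap.flip_apply]
      rw [hlt, hrt, hΨ', hΨ', hΨ', hΔ, hB'app, hB'app, hB'app, hB'app,
        hD v a (M.r u x), M.lr, M.r_mul a u x, M.r_mul u v x]
      ring
    have h1 : Tendsto (fun i => g₁ (ρ (e i))) ↑U (𝓝 0) := by
      have hh : (fun i => g₁ (ρ (e i)))
          = fun i => ((ev x).comp (Ψ'.comp ρ)) (a * e i)
            - ((ev x).comp (Ψ'.comp ρ)) (e i * a) := by
        funext i
        simp only [hg₁, hevdef, ContinuousLinearMap.comp_apply,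
          ContinuousLinearMap.sub_apply, ContinuousLinearMap.apply_apply]
        rw [← hρl a (e i), ← hρr (e i) a]
      rw [hh]
      have hc := ((ev x).comp (Ψ'.comp ρ)).continuous.tendsto a
      simpa using (hc.comp (haeU a)).sub (hc.comp (heaU a))
    have h2 : Tendsto (fun i => g₂ (ρ (e i)))
        ↑U (𝓝 (φ' (M.r a x) - φ' (M.l a x) - P (D a) x)) := by
      have hh : (fun i => g₂ (ρ (e i)))
          = fun i => Ψ' (ρ (e i)) (M.r a x) - Ψ' (ρ (e i)) (M.l a x)
            - (D a) (M.r (e i) x) := by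
        funext i
        simp only [hg₂, hevdef, ContinuousLinearMap.comp_apply,
          ContinuousLinearMap.sub_apply, ContinuousLinearMap.apply_apply,
          ContinuousLinearMap.flip_apply]
        rw [hρΔ (e i)]
      rw [hh]
      exact ((hφ' (M.r a x)).sub (hφ' (M.l a x))).sub (hP (D a) x)
    rw [hg] at h1
    have h3 := tendsto_nhds_unique h1 h2
    linear_combination h3
  -- φ₁ kills the range of the right action
  have hφ₁r : ∀ a x, φ₁ (M.r a x) = 0 := by
    intro a x
    have hz : ∀ m : X, Ψ₁ m (M.r a x) = 0 := by
      have hg : (ev (M.r a x)).comp Ψ₁ = (0 : X →L[ℂ] ℂ) := by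
        refine ht.ext_clm _ _ ?_
        intro u v
        simp only [hevdef, ContinuousLinearMap.comp_apply,
          ContinuousLinearMap.apply_apply, ContinuousLinearMap.zero_apply]
        rw [hΨ₁, hB₁app, M.lr, hD₁r]
      intro m
      have := congrFun (congrArg (fun (g : X →L[ℂ] ℂ) => (g : X → ℂ)) hg) m
      simpa [hevdef] using this
    have h1 := hφ₁ (M.r a x)
    have h2 : Tendsto (fun i => Ψ₁ (ρ (e i)) (M.r a x)) ↑U (𝓝 0) := by
      simpa [hz] using (tendsto_const_nhds : Tendsto (fun _ : ι => (0:ℂ)) ↑U (𝓝 0))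
    exact (tendsto_nhds_unique h1 h2)
  -- D₁ is inner-ish: D₁ a x = φ₁ (M.l a x)
  have hD₁inner : ∀ a x, D₁ a x = φ₁ (M.l a x) := by
    intro a x
    -- identity (Ic)
    have hIc : ∀ m : X, Ψ₁ (l a m) x = D₁ a (M.l (Δ m) x) := by
      have hg : (ev x).comp (Ψ₁.comp (l a)) = (D₁ a).comp ((M.l.flip x).comp Δ) := by
        refine ht.ext_clm _ _ ?_
        intro u v
        simp only [hevdef, ContinuousLinearMap.comp_apply,
          ContinuousLinearMap.apply_apply, ContinuousLinearMap.flip_apply]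
        rw [hlt, hΨ₁, hB₁app, hΔ, hD₁d a u (M.l v x), ← M.l_mul]
      intro m
      have := congrFun (congrArg (fun (g : X →L[ℂ] ℂ) => (g : X → ℂ)) hg) m
      simpa [hevdef] using this
    -- identity (Ib)
    have hIb : ∀ m : X, Ψ₁ (r a m) x = Ψ₁ m (M.l a x) := by
      have hg : (ev x).comp (Ψ₁.comp (r a)) = (ev (M.l a x)).comp Ψ₁ := by
        refine ht.ext_clm _ _ ?_
        intro u v
        simp only [hevdef, ContinuousLinearMap.comp_apply,
          ContinuousLinearMap.apply_apply]
        rw [hrt, hΨ₁, hΨ₁, hB₁app, hB₁app, ← M.l_mul]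
      intro m
      have := congrFun (congrArg (fun (g : X →L[ℂ] ℂ) => (g : X → ℂ)) hg) m
      simpa [hevdef] using this
    -- Ψ₁ (ρ a) x = D₁ a x
    have hA : Ψ₁ (ρ a) x = D₁ a x := by
      have h1 : Tendsto (fun i => Ψ₁ (ρ (a * e i)) x) ↑U (𝓝 (Ψ₁ (ρ a) x)) := by
        have hc := (((ev x).comp (Ψ₁.comp ρ)).continuous.tendsto a).comp (haeU a)
        exact hc
      have h2 : Tendsto (fun i => Ψ₁ (ρ (a * e i)) x) ↑U (𝓝 (D₁ a x)) := by
        have hh : (fun i => Ψ₁ (ρ (a * e i)) x) = fun i => D₁ a (M.l (e i) x) := by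
          funext i
          rw [hρl a (e i), hIc (ρ (e i)), hρΔ (e i)]
        rw [hh]
        have := hQ (D₁ a) x
        rwa [hQD₁ a x] at this
      exact tendsto_nhds_unique h1 h2
    -- Ψ₁ (ρ a) x = φ₁ (M.l a x)
    have hB : Ψ₁ (ρ a) x = φ₁ (M.l a x) := by
      have h1 : Tendsto (fun i => Ψ₁ (ρ (e i * a)) x) ↑U (𝓝 (Ψ₁ (ρ a) x)) := by
        have hc := (((ev x).comp (Ψ₁.comp ρ)).continuous.tendsto a).comp (heaU a)
        exact hc
      have h2 : Tendsto (fun i => Ψ₁ (ρ (e i * a)) x) ↑U (𝓝 (φ₁ (M.l a x))) := by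
        have hh : (fun i => Ψ₁ (ρ (e i * a)) x) = fun i => Ψ₁ (ρ (e i)) (M.l a x) := by
          funext i
          rw [hρr (e i) a, hIb (ρ (e i))]
        rw [hh]
        exact hφ₁ (M.l a x)
      exact tendsto_nhds_unique h1 h2
    rw [← hA, hB]
  -- conclusion
  refine ⟨φ' - φ₁, fun a x => ?_⟩
  have h0 : D a x = P (D a) x + D₁ a x := by
    rw [hD₁x a x]; ring
  rw [h0, keyP a x, hD₁inner a x, ContinuousLinearMap.sub_apply,
    ContinuousLinearMap.sub_apply, hφ₁r a x]
  ring
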